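/- There exist irrational numbers α (Diophantine) and β (Liouville) such that, writing (q_n) for the denominators of β, there exists a diverging subsequence (n_k) with ‖(q_{n_k}+1)α‖_ℤ → 0. -/

import Mathlib

open Filter Real

noncomputable section

namespace Stmt8Aux


/-! ### AddCircle norm lemmas -/

lemma abs_sub_round_le (y : ℝ) : |y - round y| ≤ |y| := by
  rcases le_or_gt (1/2) |y| with h | h
  · exact (abs_sub_round y).trans h
  · have h' := abs_lt.mp h
    have : round y = 0 := round_eq_zero_iff.mpr ⟨le_of_lt h'.1, h'.2⟩
    simp [this]

lemma norm_coe_eq (x : ℝ) : ‖((x : ℝ) : AddCircle (1:ℝ))‖ = |x - round x| :=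
  UnitAddCircle.norm_eq

lemma coe_int_eq_zero (m : ℤ) : (((m : ℝ)) : AddCircle (1:ℝ)) = 0 := by
  refine (AddCircle.coe_eq_zero_iff _).mpr ⟨m, by simp⟩

lemma norm_coe_le (x : ℝ) (m : ℤ) : ‖((x : ℝ) : AddCircle (1:ℝ))‖ ≤ |x - (m:ℝ)| := by
  have h1 : ((x : ℝ) : AddCircle (1:ℝ)) = (((x - (m:ℝ) : ℝ)) : AddCircle (1:ℝ)) := by
    have : (((x - (m:ℝ) : ℝ)) : AddCircle (1:ℝ))
        = ((x : ℝ) : AddCircle (1:ℝ)) - (((m:ℝ) : ℝ) : AddCircle (1:ℝ)) := by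
      push_cast
      rfl
    rw [this, coe_int_eq_zero, sub_zero]
  rw [h1, norm_coe_eq]
  exact abs_sub_round_le _



/-! ### sqrt 2 Diophantine bound -/

lemma sqrt2_lb (n : ℕ) (hn : 1 ≤ n) (m : ℤ) :
    1/(4*(n:ℝ)) ≤ |(n:ℝ) * Real.sqrt 2 - (m:ℝ)| := by
  set s : ℝ := Real.sqrt 2 with hs_def
  have hs : s^2 = 2 := Real.sq_sqrt (by norm_num)
  have hs0 : 0 ≤ s := Real.sqrt_nonneg 2
  have hs1 : 1 < s := by nlinarith
  have hs2 : s < 3/2 := by nlinarith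
  have hn1 : (1:ℝ) ≤ (n:ℝ) := by exact_mod_cast hn
  have hirr : ((n:ℕ):ℝ) * s ≠ (m:ℝ) := by
    have : Irrational ((n:ℕ) * s) :=
      (irrational_natCast_mul_iff).mpr ⟨by omega, irrational_sqrt_two⟩
    exact this.ne_int m
  rcases lt_or_ge (m:ℝ) 0 with hm0 | hm0
  · have : (n:ℝ) * s - m > 1 := by nlinarith
    have habs : |(n:ℝ)*s - m| ≥ 1 := by
      rw [abs_of_pos (by linarith)]; linarith
    have : 1/(4*(n:ℝ)) ≤ 1 := by
      rw [div_le_one (by positivity)]; linarith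
    linarith
  rcases lt_or_ge (2*(n:ℝ)) (m:ℝ) with hm2 | hm2
  · have : (m:ℝ) - n*s > 1/2 := by nlinarith
    have habs : |(n:ℝ)*s - m| ≥ 1/2 := by
      rw [abs_sub_comm, abs_of_pos (by linarith)]; linarith
    have : 1/(4*(n:ℝ)) ≤ 1/2 := by
      rw [div_le_div_iff₀ (by positivity) (by norm_num)]; linarith
    linarith
  · -- main case : 0 ≤ m ≤ 2n
    have hz : (2*(n:ℤ)^2 - m^2 : ℤ) ≠ 0 := by
      intro h
      have h' : (m:ℝ)^2 = 2*(n:ℝ)^2 := by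
        have := congrArg (fun z : ℤ => (z:ℝ)) h
        push_cast at this
        linarith
      have hfac : ((n:ℝ)*s - m) * ((n:ℝ)*s + m) = 0 := by nlinarith
      rcases mul_eq_zero.mp hfac with h1 | h1
      · exact hirr (by push_cast; linarith)
      · have : (n:ℝ)*s + m > 0 := by nlinarith
        linarith
    have hz1 : (1:ℝ) ≤ |2*(n:ℝ)^2 - (m:ℝ)^2| := by
      have := Int.one_le_abs hz
      calc (1:ℝ) ≤ ((|2*(n:ℤ)^2 - m^2| : ℤ) : ℝ) := by exact_mod_cast this
        _ = |2*(n:ℝ)^2 - (m:ℝ)^2| := by push_cast; rw [abs_sub_comm, abs_sub_comm ((m:ℝ)^2)]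
    have hfac : ((n:ℝ)*s - m) * ((n:ℝ)*s + m) = 2*(n:ℝ)^2 - (m:ℝ)^2 := by nlinarith
    have hsum_pos : 0 < (n:ℝ)*s + m := by nlinarith
    have hsum_le : (n:ℝ)*s + m ≤ 4*(n:ℝ) := by nlinarith
    rw [div_le_iff₀ (by positivity)]
    calc (1:ℝ) ≤ |2*(n:ℝ)^2 - (m:ℝ)^2| := hz1
      _ = |(n:ℝ)*s - m| * ((n:ℝ)*s + m) := by
          rw [← hfac, abs_mul, abs_of_pos hsum_pos]
      _ ≤ |(n:ℝ)*s - m| * (4*(n:ℝ)) := by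
          exact mul_le_mul_of_nonneg_left hsum_le (abs_nonneg _)

/-! ### stepping lemma -/

lemma exists_step (θ t : ℝ) (hθ : Irrational θ) {ε : ℝ} (hε : 0 < ε) (A : ℕ) :
    ∃ a : ℕ, A ≤ a ∧ ∃ m : ℤ, |(a:ℝ) * θ - t - (m:ℝ)| < ε := by
  obtain ⟨N, hN⟩ := exists_nat_gt (1/ε)
  have hNpos : 0 < N := by
    rcases Nat.eq_zero_or_pos N with h0 | h0
    · exfalso; rw [h0] at hN; simp at hN; exact absurd hN (not_lt.mpr (by positivity))
    · exact h0
  obtain ⟨j, k, hk0, hkN, hjk⟩ := Real.exists_int_int_abs_mul_sub_le θ hNpos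
  set ψ : ℝ := (k:ℝ)*θ - j with hψ_def
  have hψ0 : ψ ≠ 0 := by
    have : Irrational ((k:ℤ) * θ) := (irrational_intCast_mul_iff).mpr ⟨hk0.ne', hθ⟩
    exact sub_ne_zero_of_ne (this.ne_int j)
  have hψε : |ψ| < ε := by
    have h1 : (1:ℝ)/(N+1) < ε := by
      rw [div_lt_iff₀ (by positivity)]
      have : 1 < ε * N := by
        rw [mul_comm]
        calc (1:ℝ) = (1/ε) * ε := by field_simp
          _ < N * ε := by apply mul_lt_mul_of_pos_right hN hε
      nlinarith
    linarith [hjk]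
  set u : ℝ := t - (A:ℝ)*θ with hu_def
  set w : ℝ := Int.fract u with hw_def
  have hw_eq : w = u - (⌊u⌋:ℝ) := rfl
  have hw0 : 0 ≤ w := Int.fract_nonneg u
  have hw1 : w < 1 := Int.fract_lt_one u
  have hkr : ((k.toNat : ℕ):ℝ) = (k:ℝ) := by
    exact_mod_cast congrArg (fun z : ℤ => (z:ℝ)) (Int.toNat_of_nonneg hk0.le)
  rcases hψ0.lt_or_gt with hneg | hpos
  · -- ψ < 0
    set c : ℕ := ⌈(w-1)/ψ⌉₊ with hc_def
    have hv0 : 0 ≤ (w-1)/ψ := by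
      rw [div_nonneg_iff]; right; constructor <;> linarith
    have hc1 : (w-1)/ψ ≤ (c:ℝ) := Nat.le_ceil _
    have hc2 : (c:ℝ) < (w-1)/ψ + 1 := by
      have := Nat.ceil_lt_add_one hv0
      exact this
    have hcψ1 : (c:ℝ)*ψ ≤ w - 1 := by
      have := mul_le_mul_of_nonpos_right hc1 hneg.le
      rwa [div_mul_cancel₀ _ hψ0] at this
    have hcψ2 : w - 1 + ψ < (c:ℝ)*ψ := by
      have := mul_lt_mul_of_neg_right hc2 hneg
      rwa [add_mul, one_mul, div_mul_cancel₀ _ hψ0] at this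
    refine ⟨A + c * k.toNat, Nat.le_add_right _ _, c*j - ⌊u⌋ - 1, ?_⟩
    have hval : ((A + c * k.toNat : ℕ):ℝ) * θ - t - ((c*j - ⌊u⌋ - 1 : ℤ):ℝ)
        = (c:ℝ)*ψ - (w - 1) := by
      push_cast [hkr]
      rw [hw_eq, hu_def, hψ_def]
      push_cast
      ring
    rw [hval]
    rw [abs_sub_comm, abs_of_nonneg (by linarith)]
    have : -ψ ≤ |ψ| := neg_le_abs ψ
    linarith
  · -- ψ > 0
    set c : ℕ := ⌈w/ψ⌉₊ with hc_def
    have hv0 : 0 ≤ w/ψ := div_nonneg hw0 hpos.le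
    have hc1 : w/ψ ≤ (c:ℝ) := Nat.le_ceil _
    have hc2 : (c:ℝ) < w/ψ + 1 := Nat.ceil_lt_add_one hv0
    have hcψ1 : w ≤ (c:ℝ)*ψ := by
      have := mul_le_mul_of_nonneg_right hc1 hpos.le
      rwa [div_mul_cancel₀ _ hψ0] at this
    have hcψ2 : (c:ℝ)*ψ < w + ψ := by
      have := mul_lt_mul_of_pos_right hc2 hpos
      rwa [add_mul, one_mul, div_mul_cancel₀ _ hψ0] at this
    refine ⟨A + c * k.toNat, Nat.le_add_right _ _, c*j - ⌊u⌋, ?_⟩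
    have hval : ((A + c * k.toNat : ℕ):ℝ) * θ - t - ((c*j - ⌊u⌋ : ℤ):ℝ)
        = (c:ℝ)*ψ - w := by
      push_cast [hkr]
      rw [hw_eq, hu_def, hψ_def]
      push_cast
      ring
    rw [hval]
    rw [abs_of_nonneg (by linarith)]
    have : ψ ≤ |ψ| := le_abs_self ψ
    linarith




/-! ### the recursive construction -/

lemma exists_good (n Q R : ℕ) (hn : 1 ≤ n) (hQ : 1 ≤ Q) :
    ∃ a : ℕ, Q^n + 2 ≤ a ∧
      ∃ m : ℤ, |((a*Q + R + 1 : ℕ):ℝ) * Real.sqrt 2 - (m:ℝ)| < 1/(n:ℝ) := by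
  have hθ : Irrational ((Q:ℝ) * Real.sqrt 2) :=
    (irrational_natCast_mul_iff).mpr ⟨by omega, irrational_sqrt_two⟩
  have hεpos : (0:ℝ) < 1/(n:ℝ) := by
    have : (0:ℝ) < (n:ℝ) := by exact_mod_cast hn
    positivity
  obtain ⟨a, ha, m, hm⟩ :=
    exists_step ((Q:ℝ) * Real.sqrt 2) (-(((R:ℝ)+1) * Real.sqrt 2)) hθ hεpos (Q^n+2)
  refine ⟨a, ha, m, ?_⟩
  have he : ((a*Q + R + 1 : ℕ):ℝ) * Real.sqrt 2
      = (a:ℝ) * ((Q:ℝ) * Real.sqrt 2) - (-(((R:ℝ)+1) * Real.sqrt 2)) := by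
    push_cast; ring
  rw [he]; exact hm

def pick (n Q R : ℕ) : ℕ :=
  if h : 1 ≤ n ∧ 1 ≤ Q then (exists_good n Q R h.1 h.2).choose else 0

lemma pick_spec {n Q R : ℕ} (hn : 1 ≤ n) (hQ : 1 ≤ Q) :
    Q^n + 2 ≤ pick n Q R ∧
      ∃ m : ℤ, |(((pick n Q R)*Q + R + 1 : ℕ):ℝ) * Real.sqrt 2 - (m:ℝ)| < 1/(n:ℝ) := by
  rw [pick, dif_pos (⟨hn, hQ⟩ : 1 ≤ n ∧ 1 ≤ Q)]
  exact (exists_good n Q R hn hQ).choose_spec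

def F : ℕ → ℕ × ℕ × ℕ
  | 0 => (1, 1, 0)
  | n+1 =>
    let p := F n
    let a := pick (n+1) p.2.1 p.2.2
    (a, a * p.2.1 + p.2.2, p.2.1)

def a (n : ℕ) : ℕ := (F n).1
def Q (n : ℕ) : ℕ := (F n).2.1

lemma a_succ (n : ℕ) : a (n+1) = pick (n+1) (Q n) ((F n).2.2) := rfl
lemma Q_succ (n : ℕ) : Q (n+1) = a (n+1) * Q n + (F n).2.2 := rfl
lemma F22_succ (n : ℕ) : (F (n+1)).2.2 = Q n := rfl
lemma Q_zero : Q 0 = 1 := rfl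
lemma a_zero : a 0 = 1 := rfl
lemma F22_zero : (F 0).2.2 = 0 := rfl

lemma Q_pos : ∀ n, 1 ≤ Q n := by
  intro n
  induction n with
  | zero => exact le_refl 1
  | succ n ih =>
    have h2 : Q n ^ (n+1) + 2 ≤ a (n+1) := by
      rw [a_succ]; exact (pick_spec (by omega) ih).1
    have h3 : 1 * 1 ≤ a (n+1) * Q n := Nat.mul_le_mul (by omega) ih
    rw [Q_succ]; omega

lemma a_ge (n : ℕ) : Q n ^ (n+1) + 2 ≤ a (n+1) := by
  rw [a_succ]; exact (pick_spec (by omega) (Q_pos n)).1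

lemma a_pos (n : ℕ) : 1 ≤ a n := by
  cases n with
  | zero => exact le_refl 1
  | succ n => have := a_ge n; omega

lemma a_two (n : ℕ) : 2 ≤ a (n+1) := by have := a_ge n; omega

lemma Q_one_lt (n : ℕ) : 2 ≤ Q (n+1) := by
  have h := a_two n
  have := Q_pos n
  have h3 : 2 * 1 ≤ a (n+1) * Q n := Nat.mul_le_mul h this
  rw [Q_succ]; omega

lemma Q_growth (n : ℕ) : Q n ^ (n+1) + 2 ≤ Q (n+1) := by
  have h1 := a_ge n
  have h2 := Q_pos n
  have h3 : a (n+1) * 1 ≤ a (n+1) * Q n := Nat.mul_le_mul_left _ h2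
  rw [Q_succ]; omega

lemma approx (n : ℕ) :
    ∃ m : ℤ, |((Q (n+1) + 1 : ℕ):ℝ) * Real.sqrt 2 - (m:ℝ)| < 1/((n:ℝ)+1) := by
  have h := (pick_spec (n := n+1) (Q := Q n) (R := (F n).2.2) (by omega) (Q_pos n)).2
  have e : Q (n+1) = pick (n+1) (Q n) ((F n).2.2) * Q n + (F n).2.2 := rfl
  obtain ⟨m, hm⟩ := h
  refine ⟨m, ?_⟩
  rw [e]
  have : ((n+1:ℕ):ℝ) = (n:ℝ)+1 := by push_cast; ring
  rw [← this]
  exact hm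

/-! ### tails -/

def X : ℕ → ℕ → ℝ
  | 0, n => (a n : ℝ)
  | m+1, n => (a n : ℝ) + 1/(X m (n+1))

lemma X_zero (n : ℕ) : X 0 n = (a n : ℝ) := rfl
lemma X_succ (m n : ℕ) : X (m+1) n = (a n : ℝ) + 1/(X m (n+1)) := rfl

lemma X_one_le : ∀ m n, 1 ≤ X m n := by
  intro m
  induction m with
  | zero =>
    intro n; rw [X_zero]; exact_mod_cast a_pos n
  | succ m ih =>
    intro n
    rw [X_succ]
    have h1 := ih (n+1)
    have h2 : 0 < 1/(X m (n+1)) := by positivity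
    have h3 : (1:ℝ) ≤ (a n : ℝ) := by exact_mod_cast a_pos n
    linarith

lemma X_ge_a (m n : ℕ) : (a n : ℝ) ≤ X m n := by
  cases m with
  | zero => exact le_of_eq (X_zero n).symm
  | succ m =>
    rw [X_succ]
    have h1 := X_one_le m (n+1)
    have h2 : 0 < 1/(X m (n+1)) := by positivity
    linarith

lemma X_ge_two (m n : ℕ) : 2 ≤ X m (n+1) := by
  have h1 := X_ge_a m (n+1)
  have h2 : (2:ℝ) ≤ (a (n+1) : ℝ) := by exact_mod_cast a_two n
  linarith

lemma X_diff : ∀ m, ∀ n, |X (m+1) n - X m n| ≤ (1/4:ℝ)^m := by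
  intro m
  induction m with
  | zero =>
    intro n
    rw [X_succ, X_zero (n+1), X_zero n, pow_zero]
    have h : (1:ℝ) ≤ (a (n+1) : ℝ) := by exact_mod_cast a_pos (n+1)
    have he : (a n:ℝ) + 1/(a (n+1):ℝ) - (a n:ℝ) = 1/(a (n+1):ℝ) := by ring
    rw [he]
    rw [abs_of_nonneg (by positivity)]
    rw [div_le_one (by linarith)]
    linarith
  | succ m ih =>
    intro n
    rw [X_succ (m+1) n, X_succ m n]
    have hx := X_ge_two (m+1) n
    have hy := X_ge_two m n
    have hdiff : (a n : ℝ) + 1/(X (m+1) (n+1)) - ((a n : ℝ) + 1/(X m (n+1)))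
        = (X m (n+1) - X (m+1) (n+1)) / (X (m+1) (n+1) * X m (n+1)) := by
      field_simp
      ring
    rw [hdiff, abs_div, abs_of_pos (by nlinarith : (0:ℝ) < X (m+1) (n+1) * X m (n+1))]
    have hnum : |X m (n+1) - X (m+1) (n+1)| ≤ (1/4:ℝ)^m := by
      rw [abs_sub_comm]; exact ih (n+1)
    calc |X m (n+1) - X (m+1) (n+1)| / (X (m+1) (n+1) * X m (n+1))
        ≤ (1/4:ℝ)^m / 4 := by
          apply div_le_div₀ (by positivity) hnum (by norm_num) (by nlinarith)
      _ = (1/4:ℝ)^(m+1) := by rw [pow_succ]; ring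

lemma X_cauchy (n : ℕ) : CauchySeq (fun m => X m n) := by
  apply cauchySeq_of_le_geometric (1/4 : ℝ) 1 (by norm_num)
  intro m
  rw [Real.dist_eq, abs_sub_comm, one_mul]
  exact X_diff m n

def T (n : ℕ) : ℝ := (cauchySeq_tendsto_of_complete (X_cauchy n)).choose

lemma T_lim (n : ℕ) : Tendsto (fun m => X m n) atTop (nhds (T n)) :=
  (cauchySeq_tendsto_of_complete (X_cauchy n)).choose_spec

lemma T_ge (n : ℕ) : (a n : ℝ) ≤ T n :=
  ge_of_tendsto (T_lim n) (Eventually.of_forall fun m => X_ge_a m n)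

lemma T_one_le (n : ℕ) : 1 ≤ T n := by
  have h : (1:ℝ) ≤ (a n : ℝ) := by exact_mod_cast a_pos n
  linarith [T_ge n]

lemma T_rec (n : ℕ) : T n = (a n : ℝ) + 1/(T (n+1)) := by
  have h1 : Tendsto (fun m => X (m+1) n) atTop (nhds (T n)) :=
    (T_lim n).comp (tendsto_add_atTop_nat 1)
  have hne : T (n+1) ≠ 0 := by have := T_one_le (n+1); linarith
  have h2 : Tendsto (fun m => (a n : ℝ) + 1/(X m (n+1))) atTop
      (nhds ((a n : ℝ) + 1/(T (n+1)))) :=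
    tendsto_const_nhds.add (tendsto_const_nhds.div (T_lim (n+1)) hne)
  have he : (fun m => X (m+1) n) = fun m => (a n : ℝ) + 1/(X m (n+1)) := by
    funext m; rw [X_succ]
  rw [he] at h1
  exact tendsto_nhds_unique h1 h2

lemma T_gt_one (n : ℕ) : 1 < T n := by
  rw [T_rec]
  have h := T_one_le (n+1)
  have h0 : 0 < 1/(T (n+1)) := by positivity
  have h3 : (1:ℝ) ≤ (a n : ℝ) := by exact_mod_cast a_pos n
  linarith

lemma T_floor (n : ℕ) : ⌊T n⌋ = (a n : ℤ) := by
  rw [Int.floor_eq_iff]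
  constructor
  · push_cast; exact T_ge n
  · rw [T_rec]
    have h := T_gt_one (n+1)
    have h1 : 1/(T (n+1)) < 1 := by
      rw [div_lt_one (by linarith)]; exact h
    push_cast; linarith

lemma T_fract (n : ℕ) : Int.fract (T n) = 1/(T (n+1)) := by
  have h0 : Int.fract (T n) = T n - ((⌊T n⌋ : ℤ) : ℝ) := rfl
  rw [h0, T_floor n]
  have := T_rec n
  push_cast
  linarith

def β : ℝ := T 0

lemma stream_eq :
    ∀ n, GenContFract.IntFractPair.stream β n
      = some (GenContFract.IntFractPair.of (T n)) := by
  intro n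
  induction n with
  | zero => rfl
  | succ n ih =>
    have hfr : (GenContFract.IntFractPair.of (T n)).fr = 1/(T (n+1)) := T_fract n
    have hpos : 0 < 1/(T (n+1)) := by
      have := T_one_le (n+1); positivity
    have hne : (GenContFract.IntFractPair.of (T n)).fr ≠ 0 := by
      rw [hfr]; exact ne_of_gt hpos
    have h := GenContFract.IntFractPair.stream_succ_of_some ih hne
    rw [h, hfr]
    congr 1
    rw [one_div, inv_inv]

lemma s_eq (n : ℕ) :
    (GenContFract.of β).s.get? n = some ⟨1, (a (n+1) : ℝ)⟩ := by
  have h := GenContFract.get?_of_eq_some_of_succ_get?_intFractPair_stream (stream_eq (n+1))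
  have hb : (GenContFract.IntFractPair.of (T (n+1))).b = (a (n+1) : ℤ) := T_floor (n+1)
  rw [h, hb]
  norm_num

lemma not_term (n : ℕ) : ¬(GenContFract.of β).TerminatedAt n := by
  rw [GenContFract.terminatedAt_iff_s_none, s_eq n]; simp

lemma β_irr : Irrational β := by
  intro h
  obtain ⟨q, hq⟩ := h
  have ht : (GenContFract.of β).Terminates :=
    (GenContFract.terminates_iff_rat β).mpr ⟨q, hq.symm⟩
  obtain ⟨n, hn⟩ := ht
  exact not_term n hn

lemma dens_nums : ∀ n,
    ((GenContFract.of β).dens n = ((Q n : ℕ) : ℝ)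
        ∧ ∃ p : ℤ, (GenContFract.of β).nums n = (p:ℝ))
    ∧ ((GenContFract.of β).dens (n+1) = ((Q (n+1) : ℕ) : ℝ)
        ∧ ∃ p : ℤ, (GenContFract.of β).nums (n+1) = (p:ℝ)) := by
  intro n
  induction n with
  | zero =>
    have hQ1 : Q 1 = a 1 := by rw [Q_succ, F22_zero, Q_zero]; simp
    refine ⟨⟨?_, ⟨⌊β⌋, ?_⟩⟩, ?_, ⟨(a 1 : ℤ) * ⌊β⌋ + 1, ?_⟩⟩
    · rw [GenContFract.zeroth_den_eq_one, Q_zero]; norm_num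
    · rw [GenContFract.zeroth_num_eq_h, GenContFract.of_h_eq_floor]
    · rw [GenContFract.first_den_eq (s_eq 0), hQ1]
    · rw [GenContFract.first_num_eq (s_eq 0), GenContFract.of_h_eq_floor]
      push_cast; ring
  | succ n ih =>
    obtain ⟨h1, h2⟩ := ih
    refine ⟨h2, ?_, ?_⟩
    · rw [GenContFract.dens_recurrence (s_eq (n+1)) h1.1 h2.1]
      have e : Q (n+2) = a (n+2) * Q (n+1) + Q n := by
        rw [Q_succ (n+1), F22_succ]
      rw [e]
      push_cast; ring
    · obtain ⟨p0, hp0⟩ := h1.2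
      obtain ⟨p1, hp1⟩ := h2.2
      refine ⟨(a (n+2):ℤ) * p1 + p0, ?_⟩
      rw [GenContFract.nums_recurrence (s_eq (n+1)) hp0 hp1]
      push_cast; ring

lemma β_liou : Liouville β := by
  intro n
  obtain ⟨hd, p, hp⟩ := (dens_nums n).2
  have hd2 : (GenContFract.of β).dens (n+2) = ((Q (n+2) : ℕ) : ℝ) := (dens_nums (n+1)).2.1
  refine ⟨p, (Q (n+1) : ℤ), ?_, ?_, ?_⟩
  · exact_mod_cast Q_one_lt n
  · intro hβ
    apply β_irr
    exact ⟨(p : ℚ)/((Q (n+1) : ℕ) : ℚ), by push_cast; exact hβ.symm⟩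
  · have hconv : (GenContFract.of β).convs (n+1) = (p:ℝ)/((Q (n+1):ℕ):ℝ) := by
      rw [GenContFract.conv_eq_num_div_den, hp, hd]
    have hb := GenContFract.abs_sub_convs_le (v := β) (not_terminatedAt_n := not_term (n+1))
    rw [hconv, hd, hd2] at hb
    have hQn : ((Q (n+1):ℕ):ℝ) ^ n < ((Q (n+1):ℕ):ℝ) * ((Q (n+2):ℕ):ℝ) := by
      have h1 : Q (n+1) ^ n ≤ Q (n+1) ^ (n+2) :=
        Nat.pow_le_pow_right (Q_pos _) (by omega)
      have h2 : Q (n+1) ^ (n+2) + 2 ≤ Q (n+2) := Q_growth (n+1)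
      have h3 : Q (n+2) ≤ Q (n+1) * Q (n+2) := Nat.le_mul_of_pos_left _ (Q_pos _)
      have : Q (n+1) ^ n < Q (n+1) * Q (n+2) := by omega
      exact_mod_cast this
    have hpow_pos : (0:ℝ) < ((Q (n+1):ℕ):ℝ) ^ n := by
      have := Q_pos (n+1)
      have h0 : (0:ℝ) < ((Q (n+1):ℕ):ℝ) := by exact_mod_cast this
      positivity
    have hfin : 1/(((Q (n+1):ℕ):ℝ) * ((Q (n+2):ℕ):ℝ)) < 1/(((Q (n+1):ℕ):ℝ)^n) :=
      one_div_lt_one_div_of_lt hpow_pos hQn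
    have hcast : ((Q (n+1) : ℤ):ℝ) = ((Q (n+1):ℕ):ℝ) := by push_cast; ring
    rw [hcast]
    calc |β - (p:ℝ)/((Q (n+1):ℕ):ℝ)| ≤ 1/(((Q (n+1):ℕ):ℝ) * ((Q (n+2):ℕ):ℝ)) := hb
      _ < 1/(((Q (n+1):ℕ):ℝ)^n) := hfin


end Stmt8Aux

end

open Filter

/-- There exist a Diophantine irrational `α` and a Liouville number `β` such that, writing
`(q n)` for the denominators of the continued fraction expansion of `β`, there is a
diverging subsequence `(n_k)` with `‖(q_{n_k} + 1) α‖_ℤ → 0`. -/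
theorem stmt8 :
    ∃ α β : ℝ, Irrational α ∧ Irrational β ∧
      (∃ C > (0 : ℝ), ∃ τ > (1 : ℝ), ∀ n : ℕ, 1 ≤ n →
        C * (n : ℝ) ^ (-τ) ≤ ‖(((n : ℝ) * α : ℝ) : AddCircle (1 : ℝ))‖) ∧
      Liouville β ∧
      ∃ nk : ℕ → ℕ, StrictMono nk ∧
        Tendsto (fun k =>
            ‖((((GenContFract.of β).dens (nk k) + 1) * α : ℝ) : AddCircle (1 : ℝ))‖)
          atTop (nhds 0) := by
  refine ⟨Real.sqrt 2, Stmt8Aux.β, irrational_sqrt_two, Stmt8Aux.β_irr, ?_, Stmt8Aux.β_liou, ?_⟩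
  · refine ⟨1/4, by norm_num, 2, by norm_num, ?_⟩
    intro n hn
    have h := Stmt8Aux.sqrt2_lb n hn (round ((n:ℝ) * Real.sqrt 2))
    have hnorm : ‖(((n:ℝ) * Real.sqrt 2 : ℝ) : AddCircle (1:ℝ))‖
        = |(n:ℝ) * Real.sqrt 2 - (round ((n:ℝ) * Real.sqrt 2) : ℝ)| :=
      Stmt8Aux.norm_coe_eq _
    rw [hnorm]
    have hr : (n:ℝ) ^ (-(2:ℝ)) = 1/((n:ℝ)^2) := by
      rw [Real.rpow_neg (Nat.cast_nonneg n), ← Real.rpow_natCast (n:ℝ) 2]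
      norm_num [one_div]
    rw [hr]
    have hn1 : (1:ℝ) ≤ (n:ℝ) := by exact_mod_cast hn
    have hb : 1/4 * (1/((n:ℝ)^2)) ≤ 1/(4*(n:ℝ)) := by
      have he : 1/4 * (1/((n:ℝ)^2)) = 1/(4*(n:ℝ)^2) := by ring
      rw [he]
      apply one_div_le_one_div_of_le (by positivity)
      nlinarith
    linarith
  · refine ⟨fun k => k + 1, by intro i j hij; show i + 1 < j + 1; omega, ?_⟩
    apply squeeze_zero (fun k => norm_nonneg _) ?_ tendsto_one_div_add_atTop_nhds_zero_nat
    intro k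
    obtain ⟨m, hm⟩ := Stmt8Aux.approx k
    have hd : (GenContFract.of Stmt8Aux.β).dens (k+1) = ((Stmt8Aux.Q (k+1) : ℕ):ℝ) :=
      (Stmt8Aux.dens_nums k).2.1
    have he : ((GenContFract.of Stmt8Aux.β).dens (k+1) + 1) * Real.sqrt 2
        = ((Stmt8Aux.Q (k+1) + 1 : ℕ):ℝ) * Real.sqrt 2 := by
      rw [hd]; push_cast; ring
    rw [he]
    calc ‖((((Stmt8Aux.Q (k+1) + 1 : ℕ):ℝ) * Real.sqrt 2 : ℝ) : AddCircle (1:ℝ))‖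
        ≤ |((Stmt8Aux.Q (k+1) + 1 : ℕ):ℝ) * Real.sqrt 2 - (m:ℝ)| :=
          Stmt8Aux.norm_coe_le _ m
      _ ≤ 1/((k:ℝ)+1) := le_of_lt hm
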